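/- Let n ≥ 1, let τ be an (n−1)-simplex in a Euclidean space, and let u be a point not in the affine span of τ, so that σ = u∗τ (the cone of u over τ) is an n-simplex. If σ is n-well-centered, then u lies strictly outside the equatorial ball of τ, i.e., dist(u, c(τ)) > R(τ). -/

import Mathlib

open scoped RealInnerProductSpace
open Finset

variable {E : Type*} [NormedAddCommGroup E] [InnerProductSpace ℝ E]

/-- A simplex is well-centered if its circumcenter is a strictly positive affine
combination of its vertices. -/
def Affine.Simplex.IsWellCentered {n : ℕ} (s : Affine.Simplex ℝ E n) : Prop :=
  ∃ w : Fin (n + 1) → ℝ, (∑ i, w i) = 1 ∧ (∀ i, 0 < w i) ∧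
    Finset.univ.affineCombination ℝ s.points w = s.circumcenter

/-- **One-Facet Equatorial Ball Condition**: if the cone `σ = u ∗ τ` over an
`(n−1)`-simplex `τ` (with apex `u` outside the affine span of `τ`) is `n`-well-centered,
then `u` lies strictly outside the equatorial ball of `τ`. -/
theorem circumradius_lt_dist_of_cone_isWellCentered
    {n : ℕ} (τ : Affine.Simplex ℝ E n) (u : E)
    (hu : u ∉ affineSpan ℝ (Set.range τ.points))
    (σ : Affine.Simplex ℝ E (n + 1)) (hσ : σ.points = Fin.cons u τ.points)
    (hwc : σ.IsWellCentered) :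
    τ.circumradius < dist u τ.circumcenter := by
  obtain ⟨w, hw1, hwpos, hwc⟩ := hwc
  set c := σ.circumcenter with hc
  set cτ := τ.circumcenter with hcτ
  have hτdist : ∀ i, dist (τ.points i) c = σ.circumradius := by
    intro i
    have := σ.dist_circumcenter_eq_circumradius i.succ
    rwa [hσ, Fin.cons_succ] at this
  have hudist : dist u c = σ.circumradius := by
    have := σ.dist_circumcenter_eq_circumradius 0
    rwa [hσ, Fin.cons_zero] at this
  -- orthogonality of c - cτ to the vector span of τ
  have horth : ∀ v ∈ vectorSpan ℝ (Set.range τ.points), ⟪c - cτ, v⟫ = 0 := by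
    intro v hv
    rw [vectorSpan_def] at hv
    induction hv using Submodule.span_induction with
    | mem x hx =>
      obtain ⟨a, ⟨i, rfl⟩, b, ⟨j, rfl⟩, rfl⟩ := hx
      have h1 : dist (τ.points j) cτ = dist (τ.points i) cτ := by
        rw [τ.dist_circumcenter_eq_circumradius, τ.dist_circumcenter_eq_circumradius]
      have h2 : dist (τ.points j) c = dist (τ.points i) c := by
        rw [hτdist, hτdist]
      have := EuclideanGeometry.inner_vsub_vsub_of_dist_eq_of_dist_eq h1 h2
      simpa using this
    | zero => simp
    | add x y _ _ hx hy => rw [inner_add_right, hx, hy, add_zero]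
    | smul a x _ hx => rw [inner_smul_right, hx, mul_zero]
  have hmemτ : ∀ i, τ.points i - cτ ∈ vectorSpan ℝ (Set.range τ.points) := by
    intro i
    have := AffineSubspace.vsub_mem_direction
      (mem_affineSpan ℝ (Set.mem_range_self i)) τ.circumcenter_mem_affineSpan
    rwa [direction_affineSpan] at this
  -- decompose c as an affine combination
  have hc' : c = w 0 • u + ∑ i : Fin (n+1), w i.succ • τ.points i := by
    rw [← hwc, Finset.univ.affineCombination_eq_linear_combination _ _ hw1,
      Fin.sum_univ_succ, hσ, Fin.cons_zero]
    congr 1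
  have hsum : w 0 + ∑ i : Fin (n+1), w i.succ = 1 := by rw [← Fin.sum_univ_succ]; exact hw1
  have hdecomp : c - cτ = w 0 • (u - cτ) + ∑ i : Fin (n+1), w i.succ • (τ.points i - cτ) := by
    rw [hc']
    have : (∑ i : Fin (n+1), w i.succ • (τ.points i - cτ)) =
        (∑ i : Fin (n+1), w i.succ • τ.points i) - (∑ i : Fin (n+1), w i.succ) • cτ := by
      rw [Finset.sum_smul]
      rw [← Finset.sum_sub_distrib]
      apply Finset.sum_congr rfl
      intro i _
      rw [smul_sub]
    rw [this, smul_sub]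
    have h1 : (∑ i : Fin (n+1), w i.succ) = 1 - w 0 := by linarith
    rw [h1]
    module
  set z := ∑ i : Fin (n+1), w i.succ • (τ.points i - cτ) with hz
  have hzmem : z ∈ vectorSpan ℝ (Set.range τ.points) :=
    Submodule.sum_mem _ fun i _ => Submodule.smul_mem _ _ (hmemτ i)
  have hw0 : 0 < w 0 := hwpos 0
  have hdne : c - cτ ≠ 0 := by
    intro h0
    apply hu
    have : u - cτ = (w 0)⁻¹ • (-z) := by
      have : w 0 • (u - cτ) = -z := by
        have := hdecomp
        rw [h0] at this
        linear_combination (norm := module) -this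
      rw [← this, smul_smul, inv_mul_cancel₀ (ne_of_gt hw0), one_smul]
    have hmem : u - cτ ∈ vectorSpan ℝ (Set.range τ.points) := by
      rw [this]
      exact Submodule.smul_mem _ _ (Submodule.neg_mem _ hzmem)
    have : u ∈ affineSpan ℝ (Set.range τ.points) := by
      have := AffineSubspace.vadd_mem_of_mem_direction
        (by rwa [direction_affineSpan] : u - cτ ∈ (affineSpan ℝ (Set.range τ.points)).direction)
        τ.circumcenter_mem_affineSpan
      simpa [hcτ] using this
    exact this
  -- key positivity
  have hinner : ⟪c - cτ, c - cτ⟫ = w 0 * ⟪c - cτ, u - cτ⟫ := by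
    nth_rewrite 2 [hdecomp]
    rw [inner_add_right, inner_smul_right, horth z hzmem, add_zero]
  have hS : ⟪c - cτ, c - cτ⟫ = ‖c - cτ‖^2 := real_inner_self_eq_norm_sq _
  have hnormpos : (0:ℝ) < ⟪c - cτ, c - cτ⟫ := by
    rw [hS]
    exact pow_pos (norm_pos_iff.mpr hdne) 2
  have hX : 0 < ⟪c - cτ, u - cτ⟫ := by
    nlinarith
  -- distance computations
  have e1 : ‖u - cτ‖^2 = ‖u - c‖^2 + 2*⟪u - c, c - cτ⟫ + ‖c - cτ‖^2 := by
    have h : u - cτ = (u - c) + (c - cτ) := by abel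
    rw [h, @norm_add_sq_real]
  have e2 : ‖τ.points 0 - cτ‖^2 =
      ‖τ.points 0 - c‖^2 + 2*⟪τ.points 0 - c, c - cτ⟫ + ‖c - cτ‖^2 := by
    have h : τ.points 0 - cτ = (τ.points 0 - c) + (c - cτ) := by abel
    rw [h, @norm_add_sq_real]
  have i1 : ⟪u - c, c - cτ⟫ = ⟪u - cτ, c - cτ⟫ - ⟪c - cτ, c - cτ⟫ := by
    have h : u - c = (u - cτ) - (c - cτ) := by abel
    rw [h, inner_sub_left]
  have i2 : ⟪τ.points 0 - c, c - cτ⟫ = - ⟪c - cτ, c - cτ⟫ := by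
    have h : τ.points 0 - c = (τ.points 0 - cτ) - (c - cτ) := by abel
    rw [h, inner_sub_left]
    have : ⟪c - cτ, τ.points 0 - cτ⟫ = 0 := horth _ (hmemτ 0)
    rw [real_inner_comm] at this
    rw [this]
    ring
  have hR1 : ‖u - c‖ = σ.circumradius := by rw [← hudist, dist_eq_norm]
  have hR2 : ‖τ.points 0 - c‖ = σ.circumradius := by rw [← hτdist 0, dist_eq_norm]
  have hr : ‖τ.points 0 - cτ‖ = τ.circumradius := by
    rw [← τ.dist_circumcenter_eq_circumradius 0, dist_eq_norm]
  have hXsym : ⟪u - cτ, c - cτ⟫ = ⟪c - cτ, u - cτ⟫ := real_inner_comm _ _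
  have hsq : τ.circumradius^2 < ‖u - cτ‖^2 := by
    rw [← hr]
    have hRR : ‖u - c‖^2 = ‖τ.points 0 - c‖^2 := by rw [hR1, hR2]
    linarith [e1, e2, i1, i2, hX, hXsym, hS, hRR]
  have : dist u cτ = ‖u - cτ‖ := dist_eq_norm _ _
  rw [this]
  exact lt_of_pow_lt_pow_left₀ 2 (norm_nonneg _) hsq
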